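/- arXiv:1810.00512 — 5 statements merged into one kernel-verified Lean document; each statement's English description precedes it below -/
import Mathlib

section
/- Let N, K ≥ 1, A ∈ ℝ^{N×N}, B ∈ ℝ^{N×K}, let Q ∈ GL_N(ℝ) and M_u ∈ GL_K(ℝ) be invertible matrices, and let F ∈ ℝ^{K×N}. Then the pair (A, B) satisfies the Kalman rank condition if and only if the pair (Q^{-1}(AQ + BF), Q^{-1} B M_u) satisfies the Kalman rank condition. -/
open Matrix

/-- The Kalman matrix `(B, AB, …, A^{steps-1}B)` of a pair `(A, B)`, with the blocks
`A^i B` concatenated horizontally. -/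
noncomputable def kalmanMatrix {n k : Type*} [Fintype n] [Fintype k] [DecidableEq n]
    (steps : ℕ) (A : Matrix n n ℝ) (B : Matrix n k ℝ) :
    Matrix n (Fin steps × k) ℝ :=
  fun p iq => (A ^ (iq.1 : ℕ) * B) p iq.2

section Aux

variable {N K : ℕ}

/-- The controllability subspace after `s` steps. -/
noncomputable def ctrlSpace (s : ℕ) (A : Matrix (Fin N) (Fin N) ℝ)
    (B : Matrix (Fin N) (Fin K) ℝ) : Submodule ℝ (Fin N → ℝ) :=
  ⨆ i < s, Submodule.map ((A ^ i).mulVecLin) (LinearMap.range B.mulVecLin)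

lemma le_ctrl {s i : ℕ} (hi : i < s) (A : Matrix (Fin N) (Fin N) ℝ)
    (B : Matrix (Fin N) (Fin K) ℝ) :
    Submodule.map ((A ^ i).mulVecLin) (LinearMap.range B.mulVecLin) ≤ ctrlSpace s A B := by
  rw [ctrlSpace]
  exact le_iSup₂_of_le i hi le_rfl

lemma range_kalman (s : ℕ) (A : Matrix (Fin N) (Fin N) ℝ) (B : Matrix (Fin N) (Fin K) ℝ) :
    LinearMap.range (kalmanMatrix s A B).mulVecLin = ctrlSpace s A B := by
  rw [Matrix.range_mulVecLin]
  have hset : Set.range (kalmanMatrix s A B)ᵀ = ⋃ i : Fin s, Set.range (A ^ (i : ℕ) * B)ᵀ := by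
    ext v
    constructor
    · rintro ⟨⟨i, q⟩, rfl⟩
      exact Set.mem_iUnion.2 ⟨i, ⟨q, rfl⟩⟩
    · intro hv
      obtain ⟨i, q, rfl⟩ := Set.mem_iUnion.1 hv
      exact ⟨(i, q), rfl⟩
  change Submodule.span ℝ (Set.range (kalmanMatrix s A B)ᵀ) = _
  rw [hset, Submodule.span_iUnion]
  have hspan : ∀ i : Fin s, Submodule.span ℝ (Set.range (A ^ (i : ℕ) * B)ᵀ)
      = Submodule.map ((A ^ (i : ℕ)).mulVecLin) (LinearMap.range B.mulVecLin) := by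
    intro i
    change Submodule.span ℝ (Set.range (A ^ (i : ℕ) * B).col) = _
    rw [← Matrix.range_mulVecLin, Matrix.mulVecLin_mul, LinearMap.range_comp]
  simp_rw [hspan]
  apply le_antisymm
  · exact iSup_le fun i => le_ctrl i.2 A B
  · rw [ctrlSpace]
    exact iSup₂_le fun i hi => le_iSup (fun j : Fin s =>
      Submodule.map ((A ^ (j : ℕ)).mulVecLin) (LinearMap.range B.mulVecLin)) ⟨i, hi⟩

lemma map_le_ctrlSpace_succ (s : ℕ) (A : Matrix (Fin N) (Fin N) ℝ)
    (B : Matrix (Fin N) (Fin K) ℝ) (G : Matrix (Fin K) (Fin N) ℝ) :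
    Submodule.map ((A + B * G).mulVecLin) (ctrlSpace s A B) ≤ ctrlSpace (s + 1) A B := by
  rintro _ ⟨x, hx, rfl⟩
  have hBy : ∀ y, B *ᵥ y ∈ ctrlSpace (s + 1) A B := by
    intro y
    exact le_ctrl (Nat.succ_pos s) A B ⟨B *ᵥ y, ⟨y, rfl⟩, by simp⟩
  have hAx : A *ᵥ x ∈ ctrlSpace (s + 1) A B := by
    have hmap : Submodule.map A.mulVecLin (ctrlSpace s A B) ≤ ctrlSpace (s + 1) A B := by
      rw [ctrlSpace, Submodule.map_iSup]
      refine iSup_le fun i => ?_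
      simp_rw [Submodule.map_iSup]
      refine iSup_le fun hi => ?_
      rw [← Submodule.map_comp, ← Matrix.mulVecLin_mul, ← pow_succ']
      exact le_ctrl (Nat.succ_lt_succ hi) A B
    exact hmap ⟨x, hx, rfl⟩
  have hsplit : (A + B * G) *ᵥ x = A *ᵥ x + B *ᵥ (G *ᵥ x) := by
    rw [Matrix.add_mulVec, Matrix.mulVec_mulVec]
  rw [Matrix.mulVecLin_apply, hsplit]
  exact Submodule.add_mem _ hAx (hBy _)

lemma ctrl_feedback_le (A : Matrix (Fin N) (Fin N) ℝ)
    (B : Matrix (Fin N) (Fin K) ℝ) (G : Matrix (Fin K) (Fin N) ℝ) :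
    ∀ s : ℕ, ctrlSpace s (A + B * G) B ≤ ctrlSpace s A B := by
  intro s
  induction s with
  | zero => simp [ctrlSpace]
  | succ s ih =>
    rw [ctrlSpace, Nat.iSup_lt_succ, ← ctrlSpace]
    refine sup_le ((ih).trans ?_) ?_
    · rw [ctrlSpace, ctrlSpace]
      exact iSup₂_le fun i hi => le_iSup₂_of_le i (hi.trans (Nat.lt_succ_self s)) le_rfl
    · cases s with
      | zero => simpa using le_ctrl Nat.one_pos A B
      | succ t =>
        have h1 : Submodule.map (((A + B * G) ^ (t + 1))).mulVecLin
            (LinearMap.range B.mulVecLin) ≤ ctrlSpace (t + 2) A B := by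
          have h2 : Submodule.map (((A + B * G) ^ t)).mulVecLin
              (LinearMap.range B.mulVecLin) ≤ ctrlSpace (t + 1) (A + B * G) B :=
            le_ctrl (Nat.lt_succ_self t) _ B
          calc Submodule.map (((A + B * G) ^ (t + 1))).mulVecLin (LinearMap.range B.mulVecLin)
              = Submodule.map (A + B * G).mulVecLin
                (Submodule.map (((A + B * G) ^ t)).mulVecLin (LinearMap.range B.mulVecLin)) := by
                rw [← Submodule.map_comp, ← Matrix.mulVecLin_mul, ← pow_succ']
            _ ≤ Submodule.map (A + B * G).mulVecLin (ctrlSpace (t + 1) A B) :=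
                Submodule.map_mono (h2.trans (ih))
            _ ≤ ctrlSpace (t + 2) A B := map_le_ctrlSpace_succ _ A B G
        exact h1

lemma ctrl_feedback_eq (A : Matrix (Fin N) (Fin N) ℝ)
    (B : Matrix (Fin N) (Fin K) ℝ) (G : Matrix (Fin K) (Fin N) ℝ) (s : ℕ) :
    ctrlSpace s (A + B * G) B = ctrlSpace s A B := by
  refine le_antisymm (ctrl_feedback_le A B G s) ?_
  have := ctrl_feedback_le (A + B * G) B (-G) s
  simpa [mul_neg] using this

lemma ctrl_input (A : Matrix (Fin N) (Fin N) ℝ) (B : Matrix (Fin N) (Fin K) ℝ)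
    (Mu : Matrix (Fin K) (Fin K) ℝ) (hMu : IsUnit Mu) (s : ℕ) :
    ctrlSpace s A (B * Mu) = ctrlSpace s A B := by
  have hrange : LinearMap.range (B * Mu).mulVecLin = LinearMap.range B.mulVecLin := by
    rw [Matrix.mulVecLin_mul]
    refine LinearMap.range_comp_of_range_eq_top _ (LinearMap.range_eq_top.2 ?_)
    intro v
    refine ⟨Mu⁻¹ *ᵥ v, ?_⟩
    rw [Matrix.mulVecLin_apply, Matrix.mulVec_mulVec,
      Matrix.mul_nonsing_inv _ ((Matrix.isUnit_iff_isUnit_det Mu).1 hMu), Matrix.one_mulVec]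
  rw [ctrlSpace, ctrlSpace, hrange]

lemma rank_kalman (s : ℕ) (A : Matrix (Fin N) (Fin N) ℝ) (B : Matrix (Fin N) (Fin K) ℝ) :
    (kalmanMatrix s A B).rank = Module.finrank ℝ (ctrlSpace s A B) := by
  rw [Matrix.rank, range_kalman]

end Aux

/-- Invariance of the Kalman rank condition under change of state coordinates `Q`,
linear feedback `F` and invertible input transformation `M_u`: `(A, B)` satisfies the
Kalman rank condition if and only if `(Q⁻¹(AQ + BF), Q⁻¹ B M_u)` does. -/
theorem kalman_invariance (N K : ℕ) (hN : 1 ≤ N) (hK : 1 ≤ K)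
    (A : Matrix (Fin N) (Fin N) ℝ) (B : Matrix (Fin N) (Fin K) ℝ)
    (Q : Matrix (Fin N) (Fin N) ℝ) (Mu : Matrix (Fin K) (Fin K) ℝ)
    (F : Matrix (Fin K) (Fin N) ℝ) (hQ : IsUnit Q) (hMu : IsUnit Mu) :
    (kalmanMatrix N A B).rank = N ↔
      (kalmanMatrix N (Q⁻¹ * (A * Q + B * F)) (Q⁻¹ * B * Mu)).rank = N := by
  have hQd : IsUnit Q.det := (Matrix.isUnit_iff_isUnit_det Q).1 hQ
  set Ahat := A + B * (F * Q⁻¹) with hAhat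
  have hAQ : A * Q + B * F = Ahat * Q := by
    rw [hAhat, Matrix.add_mul, Matrix.mul_assoc B, Matrix.mul_assoc F,
      Matrix.nonsing_inv_mul Q hQd, Matrix.mul_one]
  have hpow : ∀ i : ℕ, (Q⁻¹ * (A * Q + B * F)) ^ i = Q⁻¹ * Ahat ^ i * Q := by
    intro i
    induction i with
    | zero => simp [Matrix.nonsing_inv_mul Q hQd]
    | succ i ih =>
      rw [pow_succ, ih, hAQ, pow_succ]
      rw [Matrix.mul_assoc (Q⁻¹ * Ahat ^ i) Q, ← Matrix.mul_assoc Q Q⁻¹,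
        Matrix.mul_nonsing_inv Q hQd, Matrix.one_mul, ← Matrix.mul_assoc,
        Matrix.mul_assoc Q⁻¹ (Ahat ^ i) Ahat]
  have hkal : kalmanMatrix N (Q⁻¹ * (A * Q + B * F)) (Q⁻¹ * B * Mu)
      = Q⁻¹ * kalmanMatrix N Ahat (B * Mu) := by
    ext p iq
    obtain ⟨i, q⟩ := iq
    have hblock : (Q⁻¹ * (A * Q + B * F)) ^ (i : ℕ) * (Q⁻¹ * B * Mu)
        = Q⁻¹ * (Ahat ^ (i : ℕ) * (B * Mu)) := by
      rw [hpow]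
      simp only [Matrix.mul_assoc]
      rw [← Matrix.mul_assoc Q Q⁻¹, Matrix.mul_nonsing_inv Q hQd, Matrix.one_mul]
    show ((Q⁻¹ * (A * Q + B * F)) ^ (i : ℕ) * (Q⁻¹ * B * Mu)) p q = _
    rw [hblock, Matrix.mul_apply, Matrix.mul_apply]
    rfl
  have hr : (kalmanMatrix N (Q⁻¹ * (A * Q + B * F)) (Q⁻¹ * B * Mu)).rank
      = (kalmanMatrix N A B).rank := by
    rw [hkal, Matrix.rank_mul_eq_right_of_isUnit_det Q⁻¹ _ (Matrix.isUnit_nonsing_inv_det Q hQd),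
      rank_kalman, rank_kalman, ctrl_input Ahat B Mu hMu, hAhat, ctrl_feedback_eq]
  rw [hr]
end

section
/- Let N, K, m be integers with 1 ≤ m ≤ N and m ≤ K. Let C ∈ ℝ^{N×N} be written in 2×2 block form C = [C_{11}, C_{12}; C_{21}, C_{22}] with C_{11} ∈ ℝ^{m×m}, C_{12} ∈ ℝ^{m×(N−m)}, C_{21} ∈ ℝ^{(N−m)×m}, C_{22} ∈ ℝ^{(N−m)×(N−m)}, and let B' ∈ ℝ^{N×K} be the matrix whose (p,q) entry is 1 if p = q ≤ m and 0 otherwise (i.e., B' = [Id_m, 0; 0, 0]). Then for every λ ∈ ℂ, the N×(N+K) complex matrix obtained by concatenating λI_N − C and B' horizontally has rank N if and only if the (N−m)×N complex matrix obtained by concatenating −C_{21} and λI_{N−m} − C_{22} horizontally has rank N−m. (Here real matrices are regarded as complex matrices entrywise.) -/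
open Matrix

lemma rank_eq_card_iff_vecMul_inj {m n : Type*} [Fintype m] [Fintype n]
    (M : Matrix m n ℂ) : M.rank = Fintype.card m ↔ Function.Injective M.vecMul := by
  classical
  rw [← Matrix.rank_transpose, Matrix.rank]
  have hrn := LinearMap.finrank_range_add_finrank_ker (Mᵀ.mulVecLin)
  rw [Module.finrank_fintype_fun_eq_card] at hrn
  constructor
  · intro h
    have : Module.finrank ℂ (LinearMap.ker Mᵀ.mulVecLin) = 0 := by omega
    have hkb : LinearMap.ker Mᵀ.mulVecLin = ⊥ := Submodule.finrank_eq_zero.mp this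
    have hinj := LinearMap.ker_eq_bot.mp hkb
    intro a b hab
    exact hinj (by simp only [Matrix.mulVecLin_apply, Matrix.mulVec_transpose]; exact hab)
  · intro h
    have hinj : Function.Injective Mᵀ.mulVecLin := by
      intro a b hab
      apply h
      have := hab
      simp only [Matrix.mulVecLin_apply, Matrix.mulVec_transpose] at this
      exact this
    have : Module.finrank ℂ (LinearMap.ker Mᵀ.mulVecLin) = 0 := by
      rw [LinearMap.ker_eq_bot.mpr hinj]; simp
    omega

lemma vecMul_inj_iff_zero {m n : Type*} [Fintype m] [Fintype n]
    (M : Matrix m n ℂ) :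
    Function.Injective M.vecMul ↔ ∀ v, M.vecMul v = 0 → v = 0 := by
  rw [← Matrix.coe_vecMulLinear, ← LinearMap.ker_eq_bot, LinearMap.ker_eq_bot']
  simp [Matrix.vecMulLinear_apply]

/-- Hautus-type block rank reduction: for `C = [C₁₁, C₁₂; C₂₁, C₂₂]` and
`B' = [Id_m, 0; 0, 0]`, the matrix `(λI_N − C, B')` has rank `N` if and only if the
matrix `(−C₂₁, λI_{N−m} − C₂₂)` has rank `N − m`. -/
theorem hautus_block_rank_reduction (N K m : ℕ) (hm1 : 1 ≤ m) (hmN : m ≤ N) (hmK : m ≤ K)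
    (C11 : Matrix (Fin m) (Fin m) ℝ) (C12 : Matrix (Fin m) (Fin (N - m)) ℝ)
    (C21 : Matrix (Fin (N - m)) (Fin m) ℝ)
    (C22 : Matrix (Fin (N - m)) (Fin (N - m)) ℝ)
    (B' : Matrix (Fin m ⊕ Fin (N - m)) (Fin K) ℝ)
    (hB'top : ∀ (p : Fin m) (q : Fin K), B' (Sum.inl p) q = if (p : ℕ) = (q : ℕ) then 1 else 0)
    (hB'bot : ∀ (p : Fin (N - m)) (q : Fin K), B' (Sum.inr p) q = 0)
    (lam : ℂ) :
    (Matrix.fromCols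
        (lam • (1 : Matrix (Fin m ⊕ Fin (N - m)) (Fin m ⊕ Fin (N - m)) ℂ)
          - (Matrix.fromBlocks C11 C12 C21 C22).map Complex.ofReal)
        (B'.map Complex.ofReal)).rank = N
    ↔ (Matrix.fromCols ((-C21).map Complex.ofReal)
        (lam • (1 : Matrix (Fin (N - m)) (Fin (N - m)) ℂ)
          - C22.map Complex.ofReal)).rank = N - m := by
  classical
  set A : Matrix (Fin m ⊕ Fin (N - m)) (Fin m ⊕ Fin (N - m)) ℂ :=
    lam • (1 : Matrix (Fin m ⊕ Fin (N - m)) (Fin m ⊕ Fin (N - m)) ℂ)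
      - (Matrix.fromBlocks C11 C12 C21 C22).map Complex.ofReal with hA
  set Bc : Matrix (Fin m ⊕ Fin (N - m)) (Fin K) ℂ := B'.map Complex.ofReal with hBc
  set S : Matrix (Fin (N - m)) (Fin m ⊕ Fin (N - m)) ℂ :=
    Matrix.fromCols ((-C21).map Complex.ofReal)
      (lam • (1 : Matrix (Fin (N - m)) (Fin (N - m)) ℂ) - C22.map Complex.ofReal) with hS
  -- step 1 : vecMul with Bc
  have hB0 : ∀ v : (Fin m ⊕ Fin (N - m)) → ℂ, v ᵥ* Bc = 0 ↔ (∀ p, v (Sum.inl p) = 0) := by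
    intro v
    have key : ∀ q : Fin K, (v ᵥ* Bc) q
        = ∑ p : Fin m, v (Sum.inl p) * (if (p : ℕ) = (q : ℕ) then 1 else 0) := by
      intro q
      simp [Matrix.vecMul, dotProduct, Fintype.sum_sum_type, hBc, Matrix.map_apply,
        hB'top, hB'bot, apply_ite Complex.ofReal]
    constructor
    · intro h p
      have hq : (p : ℕ) < K := lt_of_lt_of_le p.isLt hmK
      have h0 := congrFun h (⟨(p : ℕ), hq⟩ : Fin K)
      rw [key] at h0
      have hcond : ∀ p' : Fin m,
          ((p' : ℕ) = ((⟨(p : ℕ), hq⟩ : Fin K) : ℕ)) = (p' = p) := by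
        intro p'
        simp [Fin.ext_iff]
      simp_rw [hcond] at h0
      simpa using h0
    · intro h
      funext q
      rw [key]
      simp [h]
  -- step 2 : vecMul of Sum.elim 0 w with A
  have hAw : ∀ w : Fin (N - m) → ℂ, (Sum.elim 0 w) ᵥ* A = w ᵥ* S := by
    intro w
    funext c
    cases c with
    | inl p =>
      simp [hA, hS, Matrix.vecMul, dotProduct, Fintype.sum_sum_type,
        Matrix.sub_apply, Matrix.smul_apply, Matrix.one_apply, Matrix.map_apply,
        Matrix.fromBlocks_apply₁₁, Matrix.fromBlocks_apply₂₁, Matrix.fromCols]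
    | inr j =>
      simp [hA, hS, Matrix.vecMul, dotProduct, Fintype.sum_sum_type,
        Matrix.sub_apply, Matrix.smul_apply, Matrix.one_apply, Matrix.map_apply,
        Matrix.fromBlocks_apply₁₂, Matrix.fromBlocks_apply₂₂, Matrix.fromCols]
  -- step 3 : key kernel equivalence
  have hker : ∀ v : (Fin m ⊕ Fin (N - m)) → ℂ,
      (Matrix.fromCols A Bc).vecMul v = 0
        ↔ ((∀ p, v (Sum.inl p) = 0) ∧ S.vecMul (v ∘ Sum.inr) = 0) := by
    intro v
    rw [show (Matrix.fromCols A Bc).vecMul v = v ᵥ* Matrix.fromCols A Bc from rfl,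
      Matrix.vecMul_fromCols]
    constructor
    · intro h
      have hAz : v ᵥ* A = 0 := by funext c; exact congrFun h (Sum.inl c)
      have hBz : v ᵥ* Bc = 0 := by funext c; exact congrFun h (Sum.inr c)
      have hvl := (hB0 v).mp hBz
      have hv : v = Sum.elim (0 : Fin m → ℂ) (v ∘ Sum.inr) := by
        funext i; cases i with
        | inl p => simp [hvl p]
        | inr j => simp
      refine ⟨hvl, ?_⟩
      rw [show S.vecMul (v ∘ Sum.inr) = (v ∘ Sum.inr) ᵥ* S from rfl, ← hAw]
      rw [hv] at hAz
      exact hAz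
    · rintro ⟨hvl, hSz⟩
      have hv : v = Sum.elim (0 : Fin m → ℂ) (v ∘ Sum.inr) := by
        funext i; cases i with
        | inl p => simp [hvl p]
        | inr j => simp
      have hAz : v ᵥ* A = 0 := by rw [hv, hAw]; exact hSz
      have hBz : v ᵥ* Bc = 0 := (hB0 v).mpr hvl
      funext c; cases c with
      | inl c => simpa using congrFun hAz c
      | inr c => simpa using congrFun hBz c
  -- step 4 : put together
  have hcard1 : Fintype.card (Fin m ⊕ Fin (N - m)) = N := by
    simp [Fintype.card_sum]; omega
  have hcard2 : Fintype.card (Fin (N - m)) = N - m := by simp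
  have h1 := rank_eq_card_iff_vecMul_inj (Matrix.fromCols A Bc)
  have h2 := rank_eq_card_iff_vecMul_inj S
  rw [hcard1] at h1
  rw [hcard2] at h2
  rw [h1, h2, vecMul_inj_iff_zero, vecMul_inj_iff_zero]
  constructor
  · intro h w hw
    have := h (Sum.elim 0 w) ((hker _).mpr ⟨by simp, hw⟩)
    funext j
    exact congrFun this (Sum.inr j)
  · intro h v hv
    obtain ⟨hvl, hvr⟩ := (hker v).mp hv
    have hw := h (v ∘ Sum.inr) hvr
    funext i; cases i with
    | inl p => exact hvl p
    | inr j => exact congrFun hw j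
end

section
/- Let N, K, m be integers with 1 ≤ m < N and m ≤ K. Let C ∈ ℝ^{N×N} be written in 2×2 block form C = [C_{11}, C_{12}; C_{21}, C_{22}] with C_{11} ∈ ℝ^{m×m} and C_{22} ∈ ℝ^{(N−m)×(N−m)}, and let B' ∈ ℝ^{N×K} be the matrix whose (p,q) entry is 1 if p = q ≤ m and 0 otherwise (i.e., B' = [Id_m, 0; 0, 0]). If the pair (C, B') satisfies the Kalman rank condition (with state dimension N), then the pair (C_{22}, C_{21}), with C_{22} ∈ ℝ^{(N−m)×(N−m)} and C_{21} ∈ ℝ^{(N−m)×m}, satisfies the Kalman rank condition (with state dimension N−m). -/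
open Matrix

namespace KalmanAux

open Polynomial

variable {n k : Type*} [Fintype n] [Fintype k] [DecidableEq n]

lemma sum_mulVec' {β : Type*} (s : Finset β) (f : β → Matrix n k ℝ) (x : k → ℝ) :
    (∑ i ∈ s, f i) *ᵥ x = ∑ i ∈ s, f i *ᵥ x := by
  funext p
  simp only [Finset.sum_apply, Matrix.mulVec, dotProduct, Matrix.sum_apply, Finset.sum_mul]
  exact Finset.sum_comm

lemma kalman_mulVec (steps : ℕ) (A : Matrix n n ℝ) (B : Matrix n k ℝ)
    (u : Fin steps × k → ℝ) :
    (kalmanMatrix steps A B) *ᵥ u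
      = ∑ i : Fin steps, (A ^ (i : ℕ) * B) *ᵥ (fun q => u (i, q)) := by
  funext p
  simp [kalmanMatrix, mulVec, dotProduct, Fintype.sum_prod_type, Finset.sum_apply]

/-- Every `(A^j B) x` lies in the range of the Kalman matrix (Cayley–Hamilton). -/
lemma pow_mul_mem (n' : ℕ) (hn' : 0 < n') (A : Matrix (Fin n') (Fin n') ℝ)
    (B : Matrix (Fin n') k ℝ) :
    ∀ (j : ℕ) (x : k → ℝ),
      (A ^ j * B) *ᵥ x ∈ LinearMap.range (kalmanMatrix n' A B).mulVecLin := by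
  intro j
  induction j using Nat.strong_induction_on with
  | _ j ih =>
    intro x
    by_cases hj : j < n'
    · refine ⟨fun iq => if (iq.1 : ℕ) = j then x iq.2 else 0, ?_⟩
      rw [Matrix.mulVecLin_apply, kalman_mulVec]
      rw [Fintype.sum_eq_single (⟨j, hj⟩ : Fin n')]
      · simp
      · intro i hi
        have hne : ((i : ℕ) = j) = False := by
          simp only [eq_iff_iff, iff_false]
          intro h
          exact hi (Fin.ext h)
        simp only [hne, if_false]
        exact Matrix.mulVec_zero _
    · push_neg at hj
      have hchar : A ^ j = aeval A ((X : ℝ[X]) ^ j %ₘ A.charpoly) :=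
        A.pow_eq_aeval_mod_charpoly j
      set p := (X : ℝ[X]) ^ j %ₘ A.charpoly with hp
      have hcd : A.charpoly.natDegree = n' := by
        simpa using A.charpoly_natDegree_eq_dim
      have hne1 : A.charpoly ≠ 1 := by
        intro h
        rw [h] at hcd
        simp at hcd
        omega
      have hdeg : p.natDegree < n' := by
        rw [← hcd]
        exact natDegree_modByMonic_lt _ A.charpoly_monic hne1
      have haev : aeval A p = ∑ i ∈ Finset.range n', p.coeff i • A ^ i :=
        aeval_eq_sum_range' hdeg A
      rw [hchar, haev, Matrix.sum_mul]
      rw [sum_mulVec']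
      refine Submodule.sum_mem _ fun i hi => ?_
      rw [Matrix.smul_mul, Matrix.smul_mulVec]
      refine Submodule.smul_mem _ _ (ih i ?_ x)
      exact lt_of_lt_of_le (Finset.mem_range.mp hi) hj

lemma invariant (n' : ℕ) (hn' : 0 < n') (A : Matrix (Fin n') (Fin n') ℝ)
    (B : Matrix (Fin n') k ℝ) {w : Fin n' → ℝ}
    (hw : w ∈ LinearMap.range (kalmanMatrix n' A B).mulVecLin) :
    A *ᵥ w ∈ LinearMap.range (kalmanMatrix n' A B).mulVecLin := by
  obtain ⟨u, rfl⟩ := hw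
  rw [Matrix.mulVecLin_apply, kalman_mulVec]
  rw [show (A *ᵥ ∑ i : Fin n', (A ^ (i : ℕ) * B) *ᵥ fun q => u (i, q))
      = ∑ i : Fin n', A *ᵥ ((A ^ (i : ℕ) * B) *ᵥ fun q => u (i, q)) from
    map_sum A.mulVecLin _ _]
  refine Submodule.sum_mem _ fun i _ => ?_
  rw [Matrix.mulVec_mulVec, ← Matrix.mul_assoc, ← pow_succ']
  exact pow_mul_mem n' hn' A B _ _

end KalmanAux

/-- If `C = [C₁₁, C₁₂; C₂₁, C₂₂]` and `B' = [Id_m, 0; 0, 0]` satisfy the Kalman rank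
condition with state dimension `N`, then the pair `(C₂₂, C₂₁)` satisfies the Kalman rank
condition with state dimension `N - m`. -/
theorem kalman_block_reduction (N K m : ℕ) (hm1 : 1 ≤ m) (hmN : m < N) (hmK : m ≤ K)
    (C11 : Matrix (Fin m) (Fin m) ℝ) (C12 : Matrix (Fin m) (Fin (N - m)) ℝ)
    (C21 : Matrix (Fin (N - m)) (Fin m) ℝ)
    (C22 : Matrix (Fin (N - m)) (Fin (N - m)) ℝ)
    (B' : Matrix (Fin m ⊕ Fin (N - m)) (Fin K) ℝ)
    (hB'top : ∀ (p : Fin m) (q : Fin K), B' (Sum.inl p) q = if (p : ℕ) = (q : ℕ) then 1 else 0)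
    (hB'bot : ∀ (p : Fin (N - m)) (q : Fin K), B' (Sum.inr p) q = 0)
    (hkal : (kalmanMatrix N (Matrix.fromBlocks C11 C12 C21 C22) B').rank = N) :
    (kalmanMatrix (N - m) C22 C21).rank = N - m := by
  classical
  have hn' : 0 < N - m := by omega
  set Cf : Matrix (Fin m ⊕ Fin (N - m)) (Fin m ⊕ Fin (N - m)) ℝ :=
    Matrix.fromBlocks C11 C12 C21 C22 with hCf
  set W : Submodule ℝ (Fin (N - m) → ℝ) :=
    LinearMap.range (kalmanMatrix (N - m) C22 C21).mulVecLin with hW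
  -- Lemma D : bottom components of columns of `Cf^i * B'` lie in `W`.
  have hD : ∀ (i : ℕ) (x : Fin K → ℝ),
      (fun p => ((Cf ^ i * B') *ᵥ x) (Sum.inr p)) ∈ W := by
    intro i
    induction i with
    | zero =>
      intro x
      have : (fun p => ((Cf ^ 0 * B') *ᵥ x) (Sum.inr p)) = (0 : Fin (N - m) → ℝ) := by
        funext p
        simp [Matrix.mulVec, dotProduct, hB'bot]
      rw [this]
      exact Submodule.zero_mem _
    | succ i ih =>
      intro x
      have hy : (Cf ^ (i + 1) * B') *ᵥ x = Cf *ᵥ ((Cf ^ i * B') *ᵥ x) := by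
        rw [Matrix.mulVec_mulVec, ← Matrix.mul_assoc, ← pow_succ']
      set y : Fin m ⊕ Fin (N - m) → ℝ := (Cf ^ i * B') *ᵥ x with hyy
      have hsplit : y = Sum.elim (fun p => y (Sum.inl p)) (fun p => y (Sum.inr p)) := by
        funext z; cases z <;> rfl
      have hbot : (fun p => (Cf *ᵥ y) (Sum.inr p))
          = C21 *ᵥ (fun p => y (Sum.inl p)) + C22 *ᵥ (fun p => y (Sum.inr p)) := by
        funext p
        conv_lhs => rw [hsplit, hCf, Matrix.fromBlocks_mulVec]
        simp
      rw [hy, hbot]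
      refine Submodule.add_mem _ ?_ ?_
      · have := KalmanAux.pow_mul_mem (N - m) hn' C22 C21 0 (fun p => y (Sum.inl p))
        simpa [hW] using this
      · exact KalmanAux.invariant (N - m) hn' C22 C21 (ih x)
  -- the projection onto the bottom coordinates
  set π : ((Fin m ⊕ Fin (N - m)) → ℝ) →ₗ[ℝ] (Fin (N - m) → ℝ) :=
    LinearMap.funLeft ℝ ℝ Sum.inr with hπ
  set R : Submodule ℝ ((Fin m ⊕ Fin (N - m)) → ℝ) :=
    LinearMap.range (kalmanMatrix N Cf B').mulVecLin with hR
  -- R maps into W under π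
  have hmap : R.map π ≤ W := by
    rintro _ ⟨_, ⟨u, rfl⟩, rfl⟩
    rw [Matrix.mulVecLin_apply, KalmanAux.kalman_mulVec, map_sum]
    refine Submodule.sum_mem _ fun i _ => ?_
    have : π ((Cf ^ (i : ℕ) * B') *ᵥ fun q => u (i, q))
        = fun p => (((Cf ^ (i : ℕ) * B') *ᵥ fun q => u (i, q)) (Sum.inr p)) := rfl
    rw [this]
    exact hD _ _
  -- rank–nullity on π restricted to R
  have hrn := LinearMap.finrank_range_add_finrank_ker (π.comp R.subtype)
  have hrange : LinearMap.range (π.comp R.subtype) = R.map π := by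
    rw [LinearMap.range_comp, Submodule.range_subtype]
  have hRfin : Module.finrank ℝ R = N := hkal
  -- kernel bound
  have hker : Module.finrank ℝ (LinearMap.ker (π.comp R.subtype)) ≤ m := by
    have hπsurj : Function.Surjective π :=
      LinearMap.funLeft_surjective_of_injective ℝ ℝ _ Sum.inr_injective
    have hkerπ : Module.finrank ℝ (LinearMap.ker π) = m := by
      have h1 := LinearMap.finrank_range_add_finrank_ker π
      have h2 : LinearMap.range π = ⊤ := LinearMap.range_eq_top.mpr hπsurj
      rw [h2] at h1
      simp only [finrank_top, Module.finrank_pi] at h1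
      simp only [Fintype.card_sum, Fintype.card_fin] at h1
      omega
    have hle : Module.finrank ℝ (LinearMap.ker (π.comp R.subtype))
        ≤ Module.finrank ℝ (LinearMap.ker π) := by
      refine LinearMap.finrank_le_finrank_of_injective
        (f := LinearMap.codRestrict (LinearMap.ker π)
          (R.subtype.comp (LinearMap.ker (π.comp R.subtype)).subtype)
          (fun c => c.2)) ?_
      intro a b hab
      have h1 := congrArg Subtype.val hab
      exact Subtype.ext (Subtype.ext h1)
    omega
  -- range bound
  have hrangele : Module.finrank ℝ (LinearMap.range (π.comp R.subtype))
      ≤ Module.finrank ℝ W := by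
    rw [hrange]
    exact Submodule.finrank_mono hmap
  have hWle : Module.finrank ℝ W ≤ N - m := by
    simpa using (Submodule.finrank_le W)
  have : N - m ≤ Module.finrank ℝ W := by
    rw [hRfin] at hrn
    omega
  have : Module.finrank ℝ W = N - m := le_antisymm hWle this
  simpa [Matrix.rank, hW] using this
end

section
/- Let T > 0 and let α, β : [0,T] → ℝ be continuous functions. Then the following two statements are equivalent: (a) there is no pair (c,d) ∈ ℂ² with (c,d) ≠ (0,0) such that c·α(t) = d·α(t)·(∫_0^t β(τ)dτ) for all t ∈ [0,T]; (b) there exist real numbers t_1, t_2 with 0 < t_1 < t_2 < T such that α(t_1) ≠ 0, α(t_2) ≠ 0, and ∫_{t_1}^{t_2} β(τ)dτ ≠ 0. -/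
open Set intervalIntegral MeasureTheory Filter Topology

/-- Equivalence of items (2) and (3) in the lemma characterizing controllability of the
planar cascade ODE system: for continuous `α β` on `[0, T]`, the nonexistence of a nonzero
pair `(c, d) ∈ ℂ²` with `c·α(t) = d·α(t)·∫_0^t β` for all `t ∈ [0, T]` is equivalent to the
existence of `0 < t₁ < t₂ < T` with `α(t₁) ≠ 0`, `α(t₂) ≠ 0` and `∫_{t₁}^{t₂} β ≠ 0`. -/
theorem cascade_no_nonzero_pair_iff_times (T : ℝ) (hT : 0 < T) (α β : ℝ → ℝ)
    (hα : ContinuousOn α (Set.Icc 0 T)) (hβ : ContinuousOn β (Set.Icc 0 T)) :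
    (¬ ∃ c d : ℂ, ((c, d) : ℂ × ℂ) ≠ (0, 0) ∧
        ∀ t ∈ Set.Icc (0 : ℝ) T,
          c * (α t : ℂ) = d * (α t : ℂ) * ((∫ τ in (0:ℝ)..t, β τ : ℝ) : ℂ))
    ↔ (∃ t₁ t₂ : ℝ, 0 < t₁ ∧ t₁ < t₂ ∧ t₂ < T ∧
        α t₁ ≠ 0 ∧ α t₂ ≠ 0 ∧ (∫ τ in t₁..t₂, β τ) ≠ 0) := by
  set B : ℝ → ℝ := fun t => ∫ τ in (0:ℝ)..t, β τ with hB
  have hint : ∀ a b : ℝ, a ∈ Icc (0:ℝ) T → b ∈ Icc (0:ℝ) T →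
      IntervalIntegrable β MeasureTheory.volume a b := by
    intro a b ha hb
    exact (hβ.mono (Set.uIcc_subset_Icc ha hb)).intervalIntegrable
  have hBsub : ∀ a b : ℝ, a ∈ Icc (0:ℝ) T → b ∈ Icc (0:ℝ) T →
      B b - B a = ∫ τ in a..b, β τ := by
    intro a b ha hb
    have h1 := intervalIntegral.integral_add_adjacent_intervals
      (hint 0 a (Set.left_mem_Icc.2 hT.le) ha) (hint a b ha hb)
    simp only [hB]
    linarith [h1]
  have hBcont : ContinuousOn B (Icc (0:ℝ) T) := by
    have : Icc (0:ℝ) T = Set.uIcc 0 T := (Set.uIcc_of_le hT.le).symm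
    rw [this]
    exact intervalIntegral.continuousOn_primitive_interval
      (by rw [← this]; exact hβ.integrableOn_compact isCompact_Icc)
  constructor
  · -- ¬P → Q, by contrapositive
    intro hnp
    by_contra hQ
    push_neg at hQ
    apply hnp
    by_cases hz : ∀ t ∈ Set.Ioo (0:ℝ) T, α t = 0
    · -- α vanishes on (0,T), hence on [0,T]; take (c,d) = (1,0)
      have hα0 : ∀ t ∈ Icc (0:ℝ) T, α t = 0 := by
        intro t ht
        rcases eq_or_lt_of_le ht.1 with h0 | h0
        · -- t = 0
          have hne : (𝓝[Set.Ioo (0:ℝ) T] (0:ℝ)).NeBot := left_nhdsWithin_Ioo_neBot hT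
          have htend : Tendsto α (𝓝[Set.Ioo (0:ℝ) T] (0:ℝ)) (𝓝 (α 0)) :=
            (hα 0 (Set.left_mem_Icc.2 hT.le)).mono_left
              (nhdsWithin_mono _ Set.Ioo_subset_Icc_self)
          have hconst : Tendsto α (𝓝[Set.Ioo (0:ℝ) T] (0:ℝ)) (𝓝 0) := by
            refine Tendsto.congr' ?_ tendsto_const_nhds
            filter_upwards [eventually_mem_nhdsWithin] with x hx using (hz x hx).symm
          rw [← h0]
          exact tendsto_nhds_unique htend hconst
        rcases eq_or_lt_of_le ht.2 with hTt | hTt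
        · have hne : (𝓝[Set.Ioo (0:ℝ) T] T).NeBot := right_nhdsWithin_Ioo_neBot hT
          have htend : Tendsto α (𝓝[Set.Ioo (0:ℝ) T] T) (𝓝 (α T)) :=
            (hα T (Set.right_mem_Icc.2 hT.le)).mono_left
              (nhdsWithin_mono _ Set.Ioo_subset_Icc_self)
          have hconst : Tendsto α (𝓝[Set.Ioo (0:ℝ) T] T) (𝓝 0) := by
            refine Tendsto.congr' ?_ tendsto_const_nhds
            filter_upwards [eventually_mem_nhdsWithin] with x hx using (hz x hx).symm
          rw [hTt]
          exact tendsto_nhds_unique htend hconst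
        · exact hz t ⟨h0, hTt⟩
      refine ⟨1, 0, by simp, fun t ht => by simp [hα0 t ht]⟩
    · -- there is s ∈ (0,T) with α s ≠ 0
      push_neg at hz
      obtain ⟨s, hs, hαs⟩ := hz
      have hsIcc : s ∈ Icc (0:ℝ) T := ⟨hs.1.le, hs.2.le⟩
      set k : ℝ := B s with hk
      -- B equals k at any point of (0,T) where α ≠ 0
      have hBk : ∀ t ∈ Set.Ioo (0:ℝ) T, α t ≠ 0 → B t = k := by
        intro t ht hαt
        have htIcc : t ∈ Icc (0:ℝ) T := ⟨ht.1.le, ht.2.le⟩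
        rcases lt_trichotomy t s with h | h | h
        · have := hQ t s ht.1 h hs.2 hαt hαs
          have h2 := hBsub t s htIcc hsIcc
          rw [this] at h2; linarith
        · rw [h]
        · have := hQ s t hs.1 h ht.2 hαs hαt
          have h2 := hBsub s t hsIcc htIcc
          rw [this] at h2; linarith
      -- the key real identity
      have key : ∀ t ∈ Icc (0:ℝ) T, k * α t = α t * B t := by
        intro t ht
        by_cases hαt : α t = 0
        · simp [hαt]
        rcases eq_or_lt_of_le ht.1 with h0 | h0
        · -- t = 0 : show k = 0
          have hne : (𝓝[Set.Ioo (0:ℝ) s] (0:ℝ)).NeBot := left_nhdsWithin_Ioo_neBot hs.1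
          have hsub : Set.Ioo (0:ℝ) s ⊆ Icc 0 T := fun x hx =>
            ⟨hx.1.le, hx.2.le.trans hs.2.le⟩
          have htendB : Tendsto B (𝓝[Set.Ioo (0:ℝ) s] (0:ℝ)) (𝓝 (B 0)) :=
            (hBcont 0 (Set.left_mem_Icc.2 hT.le)).mono_left (nhdsWithin_mono _ hsub)
          have htendα : Tendsto α (𝓝[Set.Ioo (0:ℝ) s] (0:ℝ)) (𝓝 (α 0)) :=
            (hα 0 (Set.left_mem_Icc.2 hT.le)).mono_left (nhdsWithin_mono _ hsub)
          have hαne : ∀ᶠ x in 𝓝[Set.Ioo (0:ℝ) s] (0:ℝ), α x ≠ 0 :=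
            htendα.eventually_ne (by rw [← h0] at hαt; exact hαt)
          have hconst : Tendsto B (𝓝[Set.Ioo (0:ℝ) s] (0:ℝ)) (𝓝 k) := by
            refine Tendsto.congr' ?_ tendsto_const_nhds
            filter_upwards [eventually_mem_nhdsWithin, hαne] with x hx hax
            exact (hBk x ⟨hx.1, hx.2.trans hs.2⟩ hax).symm
          have hB0 : B 0 = k := tendsto_nhds_unique htendB hconst
          have hB00 : B 0 = 0 := by simp [hB]
          have hk0 : k = 0 := by rw [← hB0]; exact hB00
          rw [← h0, hk0, hB00]; ring
        rcases eq_or_lt_of_le ht.2 with hTt | hTt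
        · -- t = T : show B T = k
          have hne : (𝓝[Set.Ioo s T] T).NeBot := right_nhdsWithin_Ioo_neBot hs.2
          have hsub : Set.Ioo s T ⊆ Icc 0 T := fun x hx =>
            ⟨hs.1.le.trans hx.1.le, hx.2.le⟩
          have htendB : Tendsto B (𝓝[Set.Ioo s T] T) (𝓝 (B T)) :=
            (hBcont T (Set.right_mem_Icc.2 hT.le)).mono_left (nhdsWithin_mono _ hsub)
          have htendα : Tendsto α (𝓝[Set.Ioo s T] T) (𝓝 (α T)) :=
            (hα T (Set.right_mem_Icc.2 hT.le)).mono_left (nhdsWithin_mono _ hsub)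
          have hαne : ∀ᶠ x in 𝓝[Set.Ioo s T] T, α x ≠ 0 :=
            htendα.eventually_ne (by rw [hTt] at hαt; exact hαt)
          have hconst : Tendsto B (𝓝[Set.Ioo s T] T) (𝓝 k) := by
            refine Tendsto.congr' ?_ tendsto_const_nhds
            filter_upwards [eventually_mem_nhdsWithin, hαne] with x hx hax
            exact (hBk x ⟨hs.1.trans hx.1, hx.2⟩ hax).symm
          have hBT : B T = k := tendsto_nhds_unique htendB hconst
          rw [hTt, hBT]; ring
        · rw [hBk t ⟨h0, hTt⟩ hαt]; ring
      refine ⟨(k : ℂ), 1, by simp, fun t ht => ?_⟩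
      rw [one_mul]
      exact_mod_cast key t ht
  · -- Q → ¬P
    rintro ⟨t₁, t₂, h1, h12, h2T, ha1, ha2, hI⟩ ⟨c, d, hcd, heq⟩
    have ht₁ : t₁ ∈ Icc (0:ℝ) T := ⟨h1.le, (h12.trans h2T).le⟩
    have ht₂ : t₂ ∈ Icc (0:ℝ) T := ⟨(h1.trans h12).le, h2T.le⟩
    have e1 := heq t₁ ht₁
    have e2 := heq t₂ ht₂
    have hα1C : ((α t₁ : ℝ) : ℂ) ≠ 0 := by exact_mod_cast ha1
    have hα2C : ((α t₂ : ℝ) : ℂ) ≠ 0 := by exact_mod_cast ha2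
    have e1' : c = d * ((B t₁ : ℝ) : ℂ) := by
      have h : (c - d * ((B t₁ : ℝ) : ℂ)) * (α t₁ : ℂ) = 0 := by
        simp only [hB]; linear_combination e1
      rcases mul_eq_zero.1 h with h | h
      · exact sub_eq_zero.1 h
      · exact absurd h hα1C
    have e2' : c = d * ((B t₂ : ℝ) : ℂ) := by
      have h : (c - d * ((B t₂ : ℝ) : ℂ)) * (α t₂ : ℂ) = 0 := by
        simp only [hB]; linear_combination e2
      rcases mul_eq_zero.1 h with h | h
      · exact sub_eq_zero.1 h
      · exact absurd h hα2C
    have hd : d = 0 := by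
      have hdiff : d * ((B t₂ : ℂ) - (B t₁ : ℂ)) = 0 := by
        rw [mul_sub, ← e1', ← e2']; ring
      have hBne : ((B t₂ : ℝ) : ℂ) - ((B t₁ : ℝ) : ℂ) ≠ 0 := by
        have := hBsub t₁ t₂ ht₁ ht₂
        rw [sub_ne_zero]
        exact_mod_cast fun h => hI (by rw [← this, sub_eq_zero.2 (by exact_mod_cast h)])
      exact (mul_eq_zero.1 hdiff).resolve_right hBne
    have hc : c = 0 := by rw [e1', hd, zero_mul]
    exact hcd (by simp [hc, hd])
end

section
/- Let T > 0 and let α, β : [0,T] → ℝ be continuous functions. Say that the planar cascade system is exactly controllable on [0,T] if for every initial state X⁰ = (X⁰_1, X⁰_2) ∈ ℝ² and every target state X^T = (X^T_1, X^T_2) ∈ ℝ² there exists a measurable function g : [0,T] → ℝ with ∫_0^T g(t)² dt < ∞ such that the functions X_1(t) = X⁰_1 + ∫_0^t α(s)g(s) ds and X_2(t) = X⁰_2 + ∫_0^t β(s)X_1(s) ds satisfy X_1(T) = X^T_1 and X_2(T) = X^T_2. Then the planar cascade system is exactly controllable on [0,T] if and only if there exist real numbers t_1, t_2 with 0 < t_1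 < t_2 < T such that α(t_1) ≠ 0, α(t_2) ≠ 0, and ∫_{t_1}^{t_2} β(τ)dτ ≠ 0. -/
open MeasureTheory

open Set intervalIntegral

lemma cascade_fubini_helper {T : ℝ} (hT : 0 ≤ T) (γ ψ : ℝ → ℝ) (hγ : Continuous γ)
    (hψ : IntegrableOn ψ (Set.Ioc 0 T)) :
    ∫ s in (0:ℝ)..T, γ s * ∫ u in (0:ℝ)..s, ψ u
      = ∫ u in (0:ℝ)..T, (∫ s in u..T, γ s) * ψ u := by
  set μ := volume.restrict (Set.Ioc (0:ℝ) T) with hμ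
  set S : Set (ℝ × ℝ) := {p | p.2 ∈ Set.Ioc 0 p.1} with hS
  have hSm : MeasurableSet S := by
    have : S = {p : ℝ × ℝ | 0 < p.2} ∩ {p : ℝ × ℝ | p.2 ≤ p.1} := by
      ext p; simp [hS, Set.mem_Ioc, and_comm]
    rw [this]
    exact (measurableSet_lt measurable_const measurable_snd).inter
      (measurableSet_le measurable_snd measurable_fst)
  have key : ∀ p : ℝ × ℝ, γ p.1 * (Set.Ioc 0 p.1).indicator ψ p.2
      = S.indicator (fun q : ℝ × ℝ => γ q.1 * ψ q.2) p := by
    intro p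
    by_cases h : p.2 ∈ Set.Ioc 0 p.1
    · rw [Set.indicator_of_mem h, Set.indicator_of_mem (by exact h)]
    · rw [Set.indicator_of_notMem h, Set.indicator_of_notMem (by exact h), mul_zero]
  have hint : Integrable (Function.uncurry fun s u => γ s * (Set.Ioc 0 s).indicator ψ u)
      (μ.prod μ) := by
    have h1 : Integrable (fun p : ℝ × ℝ => γ p.1 * ψ p.2) (μ.prod μ) :=
      Integrable.mul_prod (hγ.integrableOn_Ioc) hψ
    have h2 := h1.indicator hSm
    refine h2.congr (Filter.Eventually.of_forall ?_)
    intro p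
    exact (key p).symm
  calc ∫ s in (0:ℝ)..T, γ s * ∫ u in (0:ℝ)..s, ψ u
      = ∫ s in Set.Ioc (0:ℝ) T, γ s * ∫ u in (0:ℝ)..s, ψ u := integral_of_le hT
    _ = ∫ s in Set.Ioc (0:ℝ) T, ∫ u in Set.Ioc (0:ℝ) T, γ s * (Set.Ioc 0 s).indicator ψ u := by
        refine setIntegral_congr_fun measurableSet_Ioc (fun s hs => ?_)
        rw [MeasureTheory.integral_const_mul]
        congr 1
        rw [integral_of_le hs.1.le, setIntegral_indicator measurableSet_Ioc,
          Set.inter_eq_right.mpr (Set.Ioc_subset_Ioc_right hs.2)]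
    _ = ∫ u in Set.Ioc (0:ℝ) T, ∫ s in Set.Ioc (0:ℝ) T, γ s * (Set.Ioc 0 s).indicator ψ u := by
        exact integral_integral_swap hint
    _ = ∫ u in Set.Ioc (0:ℝ) T, (∫ s in u..T, γ s) * ψ u := by
        refine setIntegral_congr_fun measurableSet_Ioc (fun u hu => ?_)
        have heq : ∀ s : ℝ, γ s * (Set.Ioc 0 s).indicator ψ u
            = (Set.Ici u).indicator (fun s => γ s * ψ u) s := by
          intro s
          by_cases h : u ≤ s <;>
            simp [Set.indicator_apply, Set.mem_Ioc, Set.mem_Ici, h, hu.1]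
        simp_rw [heq]
        rw [setIntegral_indicator measurableSet_Ici]
        have : Set.Ioc (0:ℝ) T ∩ Set.Ici u = Set.Icc u T := by
          ext x
          simp only [Set.mem_inter_iff, Set.mem_Ioc, Set.mem_Ici, Set.mem_Icc]
          constructor
          · rintro ⟨⟨_, hx2⟩, hx3⟩; exact ⟨hx3, hx2⟩
          · rintro ⟨hx1, hx2⟩; exact ⟨⟨lt_of_lt_of_le hu.1 hx1, hx2⟩, hx1⟩
        rw [this, integral_Icc_eq_integral_Ioc, MeasureTheory.integral_mul_const,
          ← integral_of_le hu.2]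
    _ = ∫ u in (0:ℝ)..T, (∫ s in u..T, γ s) * ψ u := (integral_of_le hT).symm

/-- Controllability of the planar cascade system `X₁' = α g`, `X₂' = β X₁` on `[0, T]` with
scalar control `g ∈ L²(0,T)` is equivalent to the existence of times `0 < t₁ < t₂ < T` with
`α(t₁) ≠ 0`, `α(t₂) ≠ 0` and `∫_{t₁}^{t₂} β ≠ 0`. -/
theorem cascade_exact_controllability_iff (T : ℝ) (hT : 0 < T) (α β : ℝ → ℝ)
    (hα : ContinuousOn α (Set.Icc 0 T)) (hβ : ContinuousOn β (Set.Icc 0 T)) :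
    (∀ X0 XT : ℝ × ℝ, ∃ g : ℝ → ℝ, Measurable g ∧
        IntervalIntegrable (fun t => (g t) ^ 2) volume 0 T ∧
        IntervalIntegrable (fun s => α s * g s) volume 0 T ∧
        (X0.1 + ∫ s in (0:ℝ)..T, α s * g s) = XT.1 ∧
        (X0.2 + ∫ s in (0:ℝ)..T,
            β s * (X0.1 + ∫ u in (0:ℝ)..s, α u * g u)) = XT.2)
    ↔ (∃ t₁ t₂ : ℝ, 0 < t₁ ∧ t₁ < t₂ ∧ t₂ < T ∧
        α t₁ ≠ 0 ∧ α t₂ ≠ 0 ∧ (∫ τ in t₁..t₂, β τ) ≠ 0) := by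
  -- the clamp function and continuous extensions of α and β
  set cl : ℝ → ℝ := fun t => min T (max 0 t) with hcl
  have hclmem : ∀ t, cl t ∈ Set.Icc 0 T := by
    intro t
    constructor
    · exact le_min hT.le (le_max_left 0 t)
    · exact min_le_left _ _
  have hcleq : ∀ t ∈ Set.Icc 0 T, cl t = t := by
    intro t ht
    simp only [hcl]
    rw [max_eq_right ht.1, min_eq_right ht.2]
  have hclc : Continuous cl := continuous_const.min (continuous_const.max continuous_id)
  set aa : ℝ → ℝ := fun t => α (cl t) with haadef
  set bb : ℝ → ℝ := fun t => β (cl t) with hbbdef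
  have haa : Continuous aa := hα.comp_continuous hclc hclmem
  have hbb : Continuous bb := hβ.comp_continuous hclc hclmem
  have haeq : ∀ t ∈ Set.Icc 0 T, aa t = α t := fun t ht => by
    simp only [haadef]; rw [hcleq t ht]
  have hbeq : ∀ t ∈ Set.Icc 0 T, bb t = β t := fun t ht => by
    simp only [hbbdef]; rw [hcleq t ht]
  set B : ℝ → ℝ := fun t => ∫ s in (0:ℝ)..t, bb s with hBdef
  have hBsub : ∀ u v : ℝ, (∫ s in u..v, bb s) = B v - B u := by
    intro u v
    rw [hBdef]
    exact (integral_interval_sub_left (hbb.intervalIntegrable 0 v)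
      (hbb.intervalIntegrable 0 u)).symm
  have hβeqint : ∀ x y, x ∈ Set.Icc 0 T → y ∈ Set.Icc 0 T →
      (∫ s in x..y, β s) = B y - B x := by
    intro x y hx hy
    rw [← hBsub]
    exact integral_congr fun s hs => (hbeq s (Set.uIcc_subset_Icc hx hy hs)).symm
  have hane : ∀ᵐ s : ℝ ∂volume, s ≠ T := by
    rw [MeasureTheory.ae_iff]
    have : {s : ℝ | ¬s ≠ T} = {T} := by ext s; simp
    rw [this]
    exact Real.volume_singleton
  constructor
  · -- forward direction
    intro hctrl
    by_contra hcon
    push_neg at hcon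
    by_cases hN : ∀ t ∈ Set.Ioo (0:ℝ) T, α t = 0
    · -- α vanishes on (0,T): cannot move X₁
      obtain ⟨g, hgm, hg2, hgi, h1, h2⟩ := hctrl ((0, 0) : ℝ × ℝ) ((1, 0) : ℝ × ℝ)
      have hz : (∫ s in (0:ℝ)..T, α s * g s) = 0 := by
        have hz0 : (∫ s in (0:ℝ)..T, α s * g s) = ∫ s in (0:ℝ)..T, (0:ℝ) := by
          apply intervalIntegral.integral_congr_ae
          filter_upwards [hane] with s hs hmem
          rw [Set.uIoc_of_le hT.le] at hmem
          rw [hN s ⟨hmem.1, lt_of_le_of_ne hmem.2 hs⟩, zero_mul]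
        simpa using hz0
      simp only [hz] at h1
      norm_num at h1
    · push_neg at hN
      obtain ⟨t₀, ht₀mem, ht₀⟩ := hN
      rw [Set.mem_Ioo] at ht₀mem
      -- B is constant (= B t₀) on the set where α ≠ 0
      have hBc : ∀ t ∈ Set.Ioo (0:ℝ) T, α t ≠ 0 → B t = B t₀ := by
        intro t ht hat
        rw [Set.mem_Ioo] at ht
        rcases lt_trichotomy t t₀ with h | h | h
        · have h0 := hcon t t₀ ht.1 h ht₀mem.2 hat ht₀
          rw [hβeqint t t₀ ⟨ht.1.le, ht.2.le⟩ ⟨ht₀mem.1.le, ht₀mem.2.le⟩] at h0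
          linarith
        · rw [h]
        · have h0 := hcon t₀ t ht₀mem.1 h ht.2 ht₀ hat
          rw [hβeqint t₀ t ⟨ht₀mem.1.le, ht₀mem.2.le⟩ ⟨ht.1.le, ht.2.le⟩] at h0
          linarith
      obtain ⟨g, hgm, hg2, hgi, h1, h2⟩ := hctrl ((0, 0) : ℝ × ℝ) ((0, 1) : ℝ × ℝ)
      simp only [zero_add] at h1 h2
      set ψ : ℝ → ℝ := fun t => aa t * g t with hψdef
      have hψeq : Set.EqOn (fun s => α s * g s) ψ (Set.Icc 0 T) := by
        intro s hs
        simp only [hψdef]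
        rw [haeq s hs]
      have hψint : IntegrableOn ψ (Set.Ioc 0 T) := by
        have h0 := (intervalIntegrable_iff_integrableOn_Ioc_of_le hT.le).mp hgi
        exact h0.congr_fun (fun s hs => hψeq (Set.Ioc_subset_Icc_self hs))
          measurableSet_Ioc
      have e1 : (∫ s in (0:ℝ)..T, β s * ∫ u in (0:ℝ)..s, α u * g u)
          = ∫ s in (0:ℝ)..T, bb s * ∫ u in (0:ℝ)..s, ψ u := by
        apply integral_congr
        intro s hs
        rw [Set.uIcc_of_le hT.le] at hs
        have hin : (∫ u in (0:ℝ)..s, α u * g u) = ∫ u in (0:ℝ)..s, ψ u := by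
          apply integral_congr
          intro u hu
          rw [Set.uIcc_of_le hs.1] at hu
          exact hψeq ⟨hu.1, le_trans hu.2 hs.2⟩
        dsimp only
        rw [hin, hbeq s hs]
      have e2 := cascade_fubini_helper hT.le bb ψ hbb hψint
      have e3 : (∫ u in (0:ℝ)..T, (∫ s in u..T, bb s) * ψ u)
          = ∫ u in (0:ℝ)..T, (B T - B t₀) * ψ u := by
        apply intervalIntegral.integral_congr_ae
        filter_upwards [hane] with u hu hmem
        rw [Set.uIoc_of_le hT.le] at hmem
        have humem : u ∈ Set.Ioo (0:ℝ) T := ⟨hmem.1, lt_of_le_of_ne hmem.2 hu⟩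
        rw [hBsub u T]
        by_cases hau : α u = 0
        · have : ψ u = 0 := by
            simp only [hψdef]
            rw [haeq u ⟨humem.1.le, humem.2.le⟩, hau, zero_mul]
          rw [this, mul_zero, mul_zero]
        · rw [hBc u humem hau]
      have e4 : (∫ u in (0:ℝ)..T, (B T - B t₀) * ψ u)
          = (B T - B t₀) * ∫ u in (0:ℝ)..T, ψ u := by
        exact intervalIntegral.integral_const_mul _ _
      have e5 : (∫ u in (0:ℝ)..T, ψ u) = 0 :=
        (integral_congr (fun s hs => hψeq (by rwa [Set.uIcc_of_le hT.le] at hs))).symm.trans h1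
      rw [e1, e2, e3, e4, e5, mul_zero] at h2
      norm_num at h2
  · -- reverse direction
    rintro ⟨t₁, t₂, ht₁, h12, h2T, ha1, ha2, hBne⟩
    have hm1 : t₁ ∈ Set.Icc (0:ℝ) T := ⟨ht₁.le, by linarith⟩
    have hm2 : t₂ ∈ Set.Icc (0:ℝ) T := ⟨by linarith, h2T.le⟩
    have hΔ : B t₂ - B t₁ ≠ 0 := by
      rw [← hβeqint t₁ t₂ hm1 hm2]; exact hBne
    have hBcont : Continuous B :=
      intervalIntegral.continuous_primitive (fun a b => hbb.intervalIntegrable a b) 0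
    set ε : ℝ := |B t₂ - B t₁| / 4 with hεdef
    have hεpos : 0 < ε := by
      have := abs_pos.mpr hΔ
      rw [hεdef]; linarith
    have hpick : ∀ t : ℝ, 0 < t → t < T → α t ≠ 0 → ∃ δ : ℝ, 0 < δ ∧ 0 < t - δ ∧ t + δ < T ∧
        ∀ x : ℝ, |x - t| < δ → aa x ≠ 0 ∧ |B x - B t| < ε := by
      intro t ht0 htT hat
      have h1 : ∀ᶠ x in nhds t, aa x ≠ 0 := by
        apply haa.continuousAt.eventually_ne
        rw [haeq t ⟨ht0.le, htT.le⟩]; exact hat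
      have h2 : ∀ᶠ x in nhds t, |B x - B t| < ε := by
        obtain ⟨δ, hδ, h4⟩ := Metric.continuousAt_iff.mp hBcont.continuousAt ε hεpos
        rw [Metric.eventually_nhds_iff]
        exact ⟨δ, hδ, fun x hx => by rw [← Real.dist_eq]; exact h4 hx⟩
      obtain ⟨δ, hδpos, hδ⟩ := Metric.eventually_nhds_iff.mp (h1.and h2)
      have h6 : (0:ℝ) < min δ (min t (T - t)) := lt_min hδpos (lt_min ht0 (by linarith))
      have h5t : min δ (min t (T - t)) ≤ t := le_trans (min_le_right _ _) (min_le_left _ _)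
      have h5T : min δ (min t (T - t)) ≤ T - t := le_trans (min_le_right _ _) (min_le_right _ _)
      have h5δ : min δ (min t (T - t)) ≤ δ := min_le_left _ _
      refine ⟨min δ (min t (T - t)) / 2, by linarith, by linarith, by linarith, ?_⟩
      intro x hx
      apply hδ
      rw [Real.dist_eq]
      calc |x - t| < min δ (min t (T - t)) / 2 := hx
        _ ≤ δ / 2 := by linarith
        _ < δ := by linarith
    obtain ⟨δ₁, hδ₁pos, hδ₁l, hδ₁r, hδ₁⟩ := hpick t₁ ht₁ (lt_trans h12 h2T) ha1
    obtain ⟨δ₂, hδ₂pos, hδ₂l, hδ₂r, hδ₂⟩ := hpick t₂ (lt_trans ht₁ h12) h2T ha2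
    -- a bump construction
    have hbump : ∀ t δ : ℝ, 0 < δ → 0 < t - δ → t + δ < T →
        (∀ x : ℝ, |x - t| < δ → aa x ≠ 0 ∧ |B x - B t| < ε) →
        ∃ φ w : ℝ → ℝ, Continuous φ ∧ Continuous w ∧ (∀ x, w x = aa x ^ 2 * φ x) ∧
          0 < (∫ s in (0:ℝ)..T, w s) ∧
          |(∫ s in (0:ℝ)..T, B s * w s) - B t * ∫ s in (0:ℝ)..T, w s|
            ≤ ε * ∫ s in (0:ℝ)..T, w s := by
      intro t δ hδpos hl hr hprop
      set φ : ℝ → ℝ := fun x => max 0 ((x - (t - δ)) * ((t + δ) - x)) with hφdef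
      have hφc : Continuous φ := continuous_const.max
        ((continuous_id.sub continuous_const).mul (continuous_const.sub continuous_id))
      set w : ℝ → ℝ := fun x => aa x ^ 2 * φ x with hwdef
      have hwc : Continuous w := (haa.pow 2).mul hφc
      have hwnn : ∀ x, 0 ≤ w x := fun x => mul_nonneg (sq_nonneg _) (le_max_left _ _)
      have hwzero : ∀ x : ℝ, δ ≤ |x - t| → w x = 0 := by
        intro x hx
        have hple : (x - (t - δ)) * ((t + δ) - x) ≤ 0 := by
          rcases abs_cases (x - t) with ⟨he, hsgn⟩ | ⟨he, hsgn⟩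
          · rw [he] at hx
            exact mul_nonpos_iff.mpr (Or.inl ⟨by linarith, by linarith⟩)
          · rw [he] at hx
            exact mul_nonpos_iff.mpr (Or.inr ⟨by linarith, by linarith⟩)
        simp only [hwdef, hφdef]
        rw [max_eq_left hple, mul_zero]
      have hwpos : ∀ x ∈ Set.Ioo (t - δ) (t + δ), 0 < w x := by
        intro x hx
        have hxd : |x - t| < δ := abs_sub_lt_iff.mpr ⟨by linarith [hx.2], by linarith [hx.1]⟩
        have hane2 := (hprop x hxd).1
        have h1 : 0 < aa x ^ 2 := by rw [sq]; exact mul_self_pos.mpr hane2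
        have h2 : 0 < φ x := by
          have hmp : 0 < (x - (t - δ)) * ((t + δ) - x) :=
            mul_pos (by linarith [hx.1]) (by linarith [hx.2])
          simp only [hφdef]
          exact lt_max_of_lt_right hmp
        exact mul_pos h1 h2
      refine ⟨φ, w, hφc, hwc, fun x => rfl, ?_, ?_⟩
      · have hsplit1 : (∫ s in (0:ℝ)..(t - δ), w s) + ∫ s in (t - δ)..(t + δ), w s
            = ∫ s in (0:ℝ)..(t + δ), w s :=
          integral_add_adjacent_intervals (hwc.intervalIntegrable _ _)
            (hwc.intervalIntegrable _ _)
        have hsplit2 : (∫ s in (0:ℝ)..(t + δ), w s) + ∫ s in (t + δ)..T, w s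
            = ∫ s in (0:ℝ)..T, w s :=
          integral_add_adjacent_intervals (hwc.intervalIntegrable _ _)
            (hwc.intervalIntegrable _ _)
        have h1 : 0 ≤ ∫ s in (0:ℝ)..(t - δ), w s :=
          integral_nonneg (by linarith) (fun u _ => hwnn u)
        have h2 : 0 ≤ ∫ s in (t + δ)..T, w s :=
          integral_nonneg (by linarith) (fun u _ => hwnn u)
        have h3 : 0 < ∫ s in (t - δ)..(t + δ), w s :=
          intervalIntegral_pos_of_pos_on (hwc.intervalIntegrable _ _) hwpos (by linarith)
        linarith
      · have hei : (∫ s in (0:ℝ)..T, B s * w s) - B t * ∫ s in (0:ℝ)..T, w s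
            = ∫ s in (0:ℝ)..T, (B s - B t) * w s := by
          have hpt : ∀ s : ℝ, (B s - B t) * w s = B s * w s - B t * w s := fun s => by ring
          simp_rw [hpt]
          rw [intervalIntegral.integral_sub (f := fun s => B s * w s) (g := fun s => B t * w s)
            ((hBcont.mul hwc).intervalIntegrable _ _)
            ((continuous_const.mul hwc).intervalIntegrable _ _),
            intervalIntegral.integral_const_mul]
        rw [hei]
        calc |∫ s in (0:ℝ)..T, (B s - B t) * w s|
            ≤ ∫ s in (0:ℝ)..T, |(B s - B t) * w s| :=
              intervalIntegral.abs_integral_le_integral_abs hT.le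
          _ ≤ ∫ s in (0:ℝ)..T, ε * w s := by
              apply intervalIntegral.integral_mono_on hT.le
                (((hBcont.sub continuous_const).mul hwc).abs.intervalIntegrable _ _)
                ((continuous_const.mul hwc).intervalIntegrable _ _)
              intro x _
              show |(B x - B t) * w x| ≤ ε * w x
              by_cases hxd : |x - t| < δ
              · rw [abs_mul, abs_of_nonneg (hwnn x)]
                exact mul_le_mul_of_nonneg_right (le_of_lt (hprop x hxd).2) (hwnn x)
              · rw [hwzero x (not_lt.mp hxd)]
                simp
          _ = ε * ∫ s in (0:ℝ)..T, w s := intervalIntegral.integral_const_mul _ _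
    obtain ⟨φ₁, w₁, hφ₁c, hw₁c, hw₁, hP₁, hQ₁⟩ := hbump t₁ δ₁ hδ₁pos hδ₁l hδ₁r hδ₁
    obtain ⟨φ₂, w₂, hφ₂c, hw₂c, hw₂, hP₂, hQ₂⟩ := hbump t₂ δ₂ hδ₂pos hδ₂l hδ₂r hδ₂
    set P₁ := ∫ s in (0:ℝ)..T, w₁ s with hP₁def
    set Q₁ := ∫ s in (0:ℝ)..T, B s * w₁ s with hQ₁def
    set P₂ := ∫ s in (0:ℝ)..T, w₂ s with hP₂def
    set Q₂ := ∫ s in (0:ℝ)..T, B s * w₂ s with hQ₂def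
    set D := P₁ * Q₂ - P₂ * Q₁ with hDdef
    have hD : D ≠ 0 := by
      intro h0
      rw [hDdef] at h0
      have h1 := abs_le.mp hQ₁
      have h2 := abs_le.mp hQ₂
      have hX : 0 < P₁ * P₂ := mul_pos hP₁ hP₂
      have hb1 : P₂ * (Q₁ - B t₁ * P₁) ≤ P₂ * (ε * P₁) :=
        mul_le_mul_of_nonneg_left h1.2 hP₂.le
      have hb2 : P₂ * (-(ε * P₁)) ≤ P₂ * (Q₁ - B t₁ * P₁) :=
        mul_le_mul_of_nonneg_left h1.1 hP₂.le
      have hb3 : P₁ * (Q₂ - B t₂ * P₂) ≤ P₁ * (ε * P₂) :=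
        mul_le_mul_of_nonneg_left h2.2 hP₁.le
      have hb4 : P₁ * (-(ε * P₂)) ≤ P₁ * (Q₂ - B t₂ * P₂) :=
        mul_le_mul_of_nonneg_left h2.1 hP₁.le
      rcases lt_or_gt_of_ne hΔ with hlt | hlt
      · have hεval : ε = -(B t₂ - B t₁) / 4 := by
          rw [hεdef, abs_of_neg (by linarith : B t₂ - B t₁ < 0)]
        nlinarith [mul_pos hεpos hX]
      · have hεval : ε = (B t₂ - B t₁) / 4 := by
          rw [hεdef, abs_of_pos (by linarith : (0:ℝ) < B t₂ - B t₁)]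
        nlinarith [mul_pos hεpos hX]
    intro X0 XT
    set c₁ := XT.1 - X0.1 with hc₁
    set c₂ := X0.2 + B T * XT.1 - XT.2 with hc₂
    set l := (c₁ * Q₂ - c₂ * P₂) / D with hldef
    set m := (c₂ * P₁ - c₁ * Q₁) / D with hmdef
    have hlP : l * P₁ + m * P₂ = c₁ := by
      rw [hldef, hmdef]
      field_simp
      rw [hDdef]
      ring
    have hlQ : l * Q₁ + m * Q₂ = c₂ := by
      rw [hldef, hmdef]
      field_simp
      rw [hDdef]
      ring
    set g : ℝ → ℝ := fun x => aa x * (l * φ₁ x + m * φ₂ x) with hgdef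
    have hgc : Continuous g :=
      haa.mul ((continuous_const.mul hφ₁c).add (continuous_const.mul hφ₂c))
    set ψ : ℝ → ℝ := fun x => l * w₁ x + m * w₂ x with hψdef
    have hψc : Continuous ψ := (continuous_const.mul hw₁c).add (continuous_const.mul hw₂c)
    have hkey : ∀ x, aa x * g x = ψ x := by
      intro x
      simp only [hgdef, hψdef]
      rw [hw₁ x, hw₂ x]
      ring
    have hkey' : Set.EqOn (fun s => α s * g s) ψ (Set.Icc 0 T) := by
      intro s hs
      simp only
      rw [← haeq s hs, hkey]
    have hψint : (∫ s in (0:ℝ)..T, ψ s) = l * P₁ + m * P₂ := by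
      simp only [hψdef]
      rw [intervalIntegral.integral_add (f := fun x => l * w₁ x) (g := fun x => m * w₂ x)
        ((continuous_const.mul hw₁c).intervalIntegrable _ _)
        ((continuous_const.mul hw₂c).intervalIntegrable _ _),
        intervalIntegral.integral_const_mul, intervalIntegral.integral_const_mul]
    have hαg : (∫ s in (0:ℝ)..T, α s * g s) = l * P₁ + m * P₂ :=
      (integral_congr (fun s hs => hkey' (by rwa [Set.uIcc_of_le hT.le] at hs))).trans hψint
    refine ⟨g, hgc.measurable, (hgc.pow 2).intervalIntegrable 0 T, ?_, ?_, ?_⟩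
    · rw [intervalIntegrable_iff_integrableOn_Ioc_of_le hT.le]
      exact (hψc.integrableOn_Ioc).congr_fun
        (fun s hs => (hkey' (Set.Ioc_subset_Icc_self hs)).symm) measurableSet_Ioc
    · rw [hαg, hlP, hc₁]
      ring
    · have estep : (∫ s in (0:ℝ)..T, β s * (X0.1 + ∫ u in (0:ℝ)..s, α u * g u))
          = ∫ s in (0:ℝ)..T, bb s * (X0.1 + ∫ u in (0:ℝ)..s, ψ u) := by
        apply integral_congr
        intro s hs
        rw [Set.uIcc_of_le hT.le] at hs
        dsimp only
        have hin : (∫ u in (0:ℝ)..s, α u * g u) = ∫ u in (0:ℝ)..s, ψ u := by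
          apply integral_congr
          intro u hu
          rw [Set.uIcc_of_le hs.1] at hu
          exact hkey' ⟨hu.1, le_trans hu.2 hs.2⟩
        rw [hbeq s hs, hin]
      have hFc : Continuous (fun s => ∫ u in (0:ℝ)..s, ψ u) :=
        intervalIntegral.continuous_primitive (fun a b => hψc.intervalIntegrable a b) 0
      have esplit : (∫ s in (0:ℝ)..T, bb s * (X0.1 + ∫ u in (0:ℝ)..s, ψ u))
          = (∫ s in (0:ℝ)..T, bb s * X0.1)
            + ∫ s in (0:ℝ)..T, bb s * ∫ u in (0:ℝ)..s, ψ u := by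
        have hpt : ∀ s : ℝ, bb s * (X0.1 + ∫ u in (0:ℝ)..s, ψ u)
            = bb s * X0.1 + bb s * ∫ u in (0:ℝ)..s, ψ u := fun s => by ring
        simp_rw [hpt]
        exact intervalIntegral.integral_add ((hbb.mul continuous_const).intervalIntegrable _ _)
          ((hbb.mul hFc).intervalIntegrable _ _)
      have efub := cascade_fubini_helper hT.le bb ψ hbb (hψc.integrableOn_Ioc)
      have estep2 : (∫ u in (0:ℝ)..T, (∫ s in u..T, bb s) * ψ u)
          = B T * (l * P₁ + m * P₂) - (l * Q₁ + m * Q₂) := by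
        have hpt : ∀ u : ℝ, (∫ s in u..T, bb s) * ψ u = B T * ψ u - B u * ψ u := by
          intro u
          rw [hBsub u T]
          ring
        simp_rw [hpt]
        rw [intervalIntegral.integral_sub (f := fun u => B T * ψ u) (g := fun u => B u * ψ u)
          ((continuous_const.mul hψc).intervalIntegrable _ _)
          ((hBcont.mul hψc).intervalIntegrable _ _)]
        congr 1
        · rw [intervalIntegral.integral_const_mul, hψint]
        · have hpt2 : ∀ u : ℝ, B u * ψ u = l * (B u * w₁ u) + m * (B u * w₂ u) := by
            intro u
            simp only [hψdef]
            ring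
          simp_rw [hpt2]
          rw [intervalIntegral.integral_add (f := fun u => l * (B u * w₁ u)) (g := fun u => m * (B u * w₂ u))
            ((continuous_const.mul (hBcont.mul hw₁c)).intervalIntegrable _ _)
            ((continuous_const.mul (hBcont.mul hw₂c)).intervalIntegrable _ _),
            intervalIntegral.integral_const_mul, intervalIntegral.integral_const_mul]
      have hbbT : (∫ s in (0:ℝ)..T, bb s * X0.1) = B T * X0.1 := by
        rw [intervalIntegral.integral_mul_const]
      rw [estep, esplit, efub, estep2, hbbT, hlP, hlQ, hc₁, hc₂]
      ring
end
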